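/- Let L be a limit operator on a set X with derived topology τ_L. Then the topological space (X, τ_L) is sequential: a set C ⊆ X is closed iff it is sequentially closed. -/
import Mathlib


/-- The derived topology `τ_L` of a limit operator `L` is sequential: a set is closed
iff it is sequentially closed. -/
theorem stmt_3 {X : Type*} (L : (ℕ → X) → Set X)
    (hL : ∀ (σ : ℕ → X) (φ : ℕ → ℕ), StrictMono φ → L σ ⊆ L (σ ∘ φ))
    (T : TopologicalSpace X)
    (hT : ∀ C : Set X, @IsClosed X T C ↔ ∀ σ : ℕ → X, (∀ n, σ n ∈ C) → L σ ⊆ C) :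
    ∀ C : Set X, @IsClosed X T C ↔
      (∀ (σ : ℕ → X) (x : X), (∀ n, σ n ∈ C) →
        Filter.Tendsto σ Filter.atTop (@nhds X T x) → x ∈ C) := by
  -- Key fact: if x ∈ L σ then σ tends to x in τ_L.
  have key : ∀ (σ : ℕ → X) (x : X), x ∈ L σ →
      Filter.Tendsto σ Filter.atTop (@nhds X T x) := by
    intro σ x hx
    letI := T; rw [tendsto_nhds]
    intro U hU hxU
    by_contra h
    have hfreq : ∃ᶠ n in Filter.atTop, σ n ∈ Uᶜ := by
      have : ¬ ∀ᶠ n in Filter.atTop, σ n ∈ U := h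
      rw [Filter.not_eventually] at this
      exact this
    obtain ⟨φ, hφ, hmem⟩ := Filter.extraction_of_frequently_atTop hfreq
    have hclosed : @IsClosed X T Uᶜ := hU.isClosed_compl
    have := (hT Uᶜ).mp hclosed (σ ∘ φ) hmem (hL σ φ hφ hx)
    exact this hxU
  intro C
  constructor
  · intro hC σ x hσ hconv
    exact hC.mem_of_tendsto hconv (Filter.Eventually.of_forall hσ)
  · intro h
    rw [hT C]
    intro σ hσ x hx
    exact h σ x hσ (key σ x hx)
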